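/- Let M be a monoid and X a type. X is E-artinian if and only if X is finite and (M is right-noetherian or X is empty), where X is E-artinian means: for every sequence of types (Xₙ)_{n : ℕ}, Kleisli morphisms eₙ : X → Option (M × Xₙ) each belonging to Surj, and Kleisli morphisms fₙ : X_{n+1} → Option (M × Xₙ) each belonging to Surj, such that fₙ ∘ e_{n+1} = eₙ (Kleisli composition) for all n, the set {n : ℕ | fₙ is not a Kleisli isomorphism} is finite. -/

import Mathlib

/-- Kleisli composition for the monad `T_M X = Option (M × X)`. -/
def KlComp {M : Type} [Monoid M] {X Y Z : Type}
    (g : Y → Option (M × Z)) (f : X → Option (M × Y)) : X → Option (M × Z) :=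
  fun x => (f x).bind fun p => (g p.2).map fun q => (p.1 * q.1, q.2)

/-- The Kleisli identity on `X`. -/
def KlId (M : Type) [Monoid M] (X : Type) : X → Option (M × X) :=
  fun x => some (1, x)

/-- A Kleisli morphism is an isomorphism when it has a two-sided inverse. -/
def IsKlIso {M : Type} [Monoid M] {X Y : Type} (f : X → Option (M × Y)) : Prop :=
  ∃ g : Y → Option (M × X), KlComp g f = KlId M X ∧ KlComp f g = KlId M Y

/-- The class `Surj` of Kleisli morphisms. -/
def KlSurj {M X Y : Type} (f : X → Option (M × Y)) : Prop :=
  ∀ y : Y, ∃ (x : X) (υ : M), f x = some (υ, y)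

/-- The class `Inj` of Kleisli morphisms. -/
def KlInj {M X Y : Type} (f : X → Option (M × Y)) : Prop :=
  ∀ (x x' : X) (υ υ' : M) (y : Y), f x = some (υ, y) → f x' = some (υ', y) → x = x'

/-- The class `Tot` of Kleisli morphisms. -/
def KlTot {M X Y : Type} (f : X → Option (M × Y)) : Prop :=
  ∀ x : X, f x ≠ none

/-- The class `Inv` of Kleisli morphisms. -/
def KlInv {M : Type} [Monoid M] {X Y : Type} (f : X → Option (M × Y)) : Prop :=
  ∀ (x : X) (υ : M) (y : Y), f x = some (υ, y) → IsUnit υ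
/-- A monoid `M` is right-noetherian if for all sequences `u v : ℕ → M` with
`v n = v (n+1) * u n` for every `n`, some `u n` is a unit. -/
def RightNoetherian (M : Type) [Monoid M] : Prop :=
  ∀ u v : ℕ → M, (∀ n, v n = v (n + 1) * u n) → ∃ n, IsUnit (u n)

/-- `X` is `E`-artinian: every cochain of `Surj`-quotients of `X`
has only finitely many non-isomorphisms. -/
def EArtinian (M : Type) [Monoid M] (X : Type) : Prop :=
  ∀ (Xs : ℕ → Type)
    (e : ∀ n : ℕ, X → Option (M × Xs n))
    (f : ∀ n : ℕ, Xs (n + 1) → Option (M × Xs n)),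
    (∀ n, KlSurj (e n)) →
    (∀ n, KlSurj (f n)) →
    (∀ n, KlComp (f n) (e (n + 1)) = e n) →
    {n : ℕ | ¬ IsKlIso (f n)}.Finite


section Aux
variable {M : Type} [Monoid M] {X Y : Type}

lemma klIso_parts {f : X → Option (M × Y)} (h : IsKlIso f) :
    KlTot f ∧ KlInj f ∧ KlSurj f ∧ KlInv f := by
  obtain ⟨g, hgf, hfg⟩ := h
  have hx : ∀ x : X, ∃ (a : M) (y : Y) (b : M),
      f x = some (a, y) ∧ g y = some (b, x) ∧ a * b = 1 := by
    intro x
    have h1 : KlComp g f x = some (1, x) := congrFun hgf x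
    unfold KlComp at h1
    cases hfx : f x with
    | none => rw [hfx] at h1; simp at h1
    | some p =>
      obtain ⟨a, y⟩ := p
      rw [hfx] at h1
      simp only [Option.bind_some] at h1
      cases hgy : g y with
      | none => rw [hgy] at h1; simp at h1
      | some q =>
        obtain ⟨b, x'⟩ := q
        rw [hgy] at h1
        simp only [Option.map_some, Option.some.injEq, Prod.mk.injEq] at h1
        obtain ⟨h2, h3⟩ := h1
        subst h3
        exact ⟨a, y, b, rfl, hgy, h2⟩
  have hy : ∀ y : Y, ∃ (b : M) (x : X) (a : M),
      g y = some (b, x) ∧ f x = some (a, y) ∧ b * a = 1 := by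
    intro y
    have h1 : KlComp f g y = some (1, y) := congrFun hfg y
    unfold KlComp at h1
    cases hgy : g y with
    | none => rw [hgy] at h1; simp at h1
    | some p =>
      obtain ⟨b, x⟩ := p
      rw [hgy] at h1
      simp only [Option.bind_some] at h1
      cases hfx : f x with
      | none => rw [hfx] at h1; simp at h1
      | some q =>
        obtain ⟨a, y'⟩ := q
        rw [hfx] at h1
        simp only [Option.map_some, Option.some.injEq, Prod.mk.injEq] at h1
        obtain ⟨h2, h3⟩ := h1
        subst h3
        exact ⟨b, x, a, rfl, hfx, h2⟩
  refine ⟨?_, ?_, ?_, ?_⟩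
  · intro x hnone
    obtain ⟨a, y, b, h1, _, _⟩ := hx x
    rw [hnone] at h1; cases h1
  · intro x x' υ υ' y hfx hfx'
    obtain ⟨a, y₁, b, h1, h2, h3⟩ := hx x
    rw [hfx] at h1
    simp only [Option.some.injEq, Prod.mk.injEq] at h1
    obtain ⟨a', y₂, b', h1', h2', h3'⟩ := hx x'
    rw [hfx'] at h1'
    simp only [Option.some.injEq, Prod.mk.injEq] at h1'
    rw [← h1.2] at h2
    rw [← h1'.2] at h2'
    rw [h2] at h2'
    simp only [Option.some.injEq, Prod.mk.injEq] at h2'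
    exact h2'.2
  · intro y
    obtain ⟨b, x, a, _, h2, _⟩ := hy y
    exact ⟨x, a, h2⟩
  · intro x υ y hf
    obtain ⟨a, y₁, b, h1, h2, h3⟩ := hx x
    rw [hf] at h1
    simp only [Option.some.injEq, Prod.mk.injEq] at h1
    obtain ⟨ha, hy1⟩ := h1
    subst ha; subst hy1
    obtain ⟨b', x', a', h4, h5, h6⟩ := hy y
    rw [h2] at h4
    simp only [Option.some.injEq, Prod.mk.injEq] at h4
    obtain ⟨hb, hx'⟩ := h4
    subst hb; subst hx'
    rw [hf] at h5
    simp only [Option.some.injEq, Prod.mk.injEq] at h5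
    rw [← h5.1] at h6
    exact ⟨⟨υ, b, h3, h6⟩, rfl⟩

lemma klIso_of {f : X → Option (M × Y)}
    (hTot : KlTot f) (hInj : KlInj f) (hSurj : KlSurj f) (hInv : KlInv f) : IsKlIso f := by
  classical
  choose s w hs using hSurj
  refine ⟨fun y => some ((((hInv _ _ _ (hs y)).unit⁻¹ : Mˣ) : M), s y), ?_, ?_⟩
  · funext x
    obtain ⟨p, hp⟩ : ∃ p, f x = some p := by
      cases h : f x with
      | none => exact absurd h (hTot x)
      | some p => exact ⟨p, rfl⟩
    obtain ⟨a, y⟩ := p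
    have hx : x = s y := hInj x (s y) a (w y) y hp (hs y)
    have ha : a = w y := by
      have hp2 := hp
      rw [hx, hs y] at hp2
      simp only [Option.some.injEq, Prod.mk.injEq] at hp2
      exact hp2.1.symm
    simp only [KlComp, KlId, hp, Option.bind_some, Option.map_some]
    rw [hx, ha, IsUnit.mul_val_inv]
  · funext y
    simp only [KlComp, KlId, Option.bind_some]
    rw [hs y]
    simp only [Option.map_some]
    rw [IsUnit.val_inv_mul]

omit [Monoid M] in
lemma klSurj_section {f : X → Option (M × Y)} (h : KlSurj f) :
    ∃ g : Y → X, Function.Injective g ∧ ∀ y, ∃ υ, f (g y) = some (υ, y) := by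
  classical
  choose g w hg using h
  refine ⟨g, ?_, fun y => ⟨w y, hg y⟩⟩
  intro y y' hyy
  have h1 := hg y
  rw [hyy, hg y'] at h1
  simp only [Option.some.injEq, Prod.mk.injEq] at h1
  exact h1.2.symm

lemma RightNoetherian.isUnit_right_of_mul_eq_one {M : Type} [Monoid M]
    (h : RightNoetherian M) {a b : M} (hab : a * b = 1) : IsUnit b := by
  obtain ⟨n, hn⟩ := h (fun _ => b) (fun n => a ^ n)
    (fun n => by show a ^ n = a ^ (n + 1) * b; rw [pow_succ, mul_assoc, hab, mul_one])
  exact hn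

lemma RightNoetherian.isUnit_left_of_mul_eq_one {M : Type} [Monoid M]
    (h : RightNoetherian M) {a b : M} (hab : a * b = 1) : IsUnit a := by
  have hb := h.isUnit_right_of_mul_eq_one hab
  have h2 : b * (↑hb.unit⁻¹ : M) = 1 := hb.mul_val_inv
  have : a = (↑hb.unit⁻¹ : M) := by
    calc a = a * (b * (↑hb.unit⁻¹ : M)) := by rw [h2, mul_one]
    _ = (a * b) * (↑hb.unit⁻¹ : M) := by rw [mul_assoc]
    _ = (↑hb.unit⁻¹ : M) := by rw [hab, one_mul]
  rw [this]; exact hb.unit⁻¹.isUnit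

lemma RightNoetherian.isUnit_right_of_isUnit_mul {M : Type} [Monoid M]
    (h : RightNoetherian M) {a b : M} (hab : IsUnit (a * b)) : IsUnit b := by
  have hc : (a * b) * (↑hab.unit⁻¹ : M) = 1 := hab.mul_val_inv
  have h1 : a * (b * (↑hab.unit⁻¹ : M)) = 1 := by rw [← mul_assoc]; exact hc
  have ha : IsUnit a := h.isUnit_left_of_mul_eq_one h1
  have hb : b = (↑ha.unit⁻¹ : M) * (a * b) := by
    rw [← mul_assoc]
    rw [ha.val_inv_mul, one_mul]
  rw [hb]
  exact (ha.unit⁻¹.isUnit).mul hab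

lemma eventually_const {c : ℕ → ℕ} (hmono : ∀ n, c n ≤ c (n + 1)) {B : ℕ}
    (hB : ∀ n, c n ≤ B) : ∃ N, ∀ n, N ≤ n → c n = c N := by
  have hm : Monotone c := monotone_nat_of_le_succ hmono
  have hbdd : BddAbove (Set.range c) := ⟨B, by rintro _ ⟨n, rfl⟩; exact hB n⟩
  obtain ⟨N, hN⟩ := Nat.sSup_mem (Set.range_nonempty c) hbdd
  refine ⟨N, fun n hn => le_antisymm ?_ (hm hn)⟩
  rw [hN]
  exact le_csSup hbdd ⟨n, rfl⟩

end Aux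

theorem eArtinian_iff (M X : Type) [Monoid M] :
    EArtinian M X ↔ (Finite X ∧ (RightNoetherian M ∨ IsEmpty X)) := by
  constructor
  · intro hEA
    constructor
    · by_contra hfin
      have : Infinite X := not_finite_iff_infinite.mp hfin
      obtain ⟨ι, hι⟩ : ∃ ι : ℕ → X, Function.Injective ι := ⟨Infinite.natEmbedding X, (Infinite.natEmbedding X).injective⟩
      set π : X → ℕ := Function.invFun ι with hπdef
      have hπ : ∀ n, π (ι n) = n := Function.leftInverse_invFun hι
      have hfin2 := hEA (fun n => Fin (n + 1))
        (fun n x => some (1, ⟨min (π x) n, by omega⟩))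
        (fun n k => some (1, ⟨min k.val n, by omega⟩))
        ?_ ?_ ?_
      · have hall : ∀ n : ℕ, ¬ IsKlIso (fun k : Fin (n + 2) => some ((1 : M), (⟨min k.val n, by omega⟩ : Fin (n + 1)))) := by
          intro n hiso
          have hinj := (klIso_parts hiso).2.1
          have h1 : (fun k : Fin (n + 2) => some ((1 : M), (⟨min k.val n, by omega⟩ : Fin (n + 1)))) ⟨n, by omega⟩ = some (1, ⟨n, by omega⟩) := by
            simp
          have h2 : (fun k : Fin (n + 2) => some ((1 : M), (⟨min k.val n, by omega⟩ : Fin (n + 1)))) ⟨n + 1, by omega⟩ = some (1, ⟨n, by omega⟩) := by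
            simp [Fin.ext_iff]
          have := hinj _ _ _ _ _ h1 h2
          simp [Fin.ext_iff] at this
        have : {n : ℕ | ¬ IsKlIso (fun k : Fin (n + 2) => some ((1 : M), (⟨min k.val n, by omega⟩ : Fin (n + 1))))} = Set.univ := by
          ext n; simpa using hall n
        rw [this] at hfin2
        exact Set.infinite_univ hfin2
      · intro n y
        refine ⟨ι y.val, 1, ?_⟩
        have hy := y.isLt
        simp only [hπ, Option.some.injEq, Prod.mk.injEq, Fin.ext_iff]
        exact ⟨trivial, by omega⟩
      · intro n y
        have hy := y.isLt
        refine ⟨⟨y.val, by omega⟩, 1, ?_⟩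
        simp only [Option.some.injEq, Prod.mk.injEq, Fin.ext_iff]
        exact ⟨trivial, by omega⟩
      · intro n
        funext x
        simp only [KlComp, Option.bind_some, Option.map_some, Option.some.injEq, Prod.mk.injEq, Fin.ext_iff]
        constructor
        · exact one_mul 1
        · omega
    · rcases isEmpty_or_nonempty X with h | h
      · exact Or.inr h
      · left
        intro u v huv
        by_contra hun
        push_neg at hun
        have hfin2 := hEA (fun _ => PUnit)
          (fun n _ => some (v n, PUnit.unit))
          (fun n _ => some (u n, PUnit.unit))
          (fun n y => ⟨h.some, v n, by cases y; rfl⟩)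
          (fun n y => ⟨PUnit.unit, u n, by cases y; rfl⟩)
          (fun n => by funext x; simp only [KlComp, Option.bind_some, Option.map_some]; rw [← huv n])
        have hall : ∀ n : ℕ, ¬ IsKlIso (fun _ : PUnit => some (u n, PUnit.unit)) := by
          intro n hiso
          exact hun n ((klIso_parts hiso).2.2.2 PUnit.unit (u n) PUnit.unit rfl)
        have : {n : ℕ | ¬ IsKlIso (fun _ : PUnit => some (u n, PUnit.unit))} = Set.univ := by
          ext n; simpa using hall n
        rw [this] at hfin2
        exact Set.infinite_univ hfin2
  · rintro ⟨hfinX, h⟩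
    classical
    intro Xs e f he hf hc
    have hsec : ∀ n, ∃ g : Xs n → X, Function.Injective g ∧ ∀ y, ∃ υ, e n (g y) = some (υ, y) :=
      fun n => klSurj_section (he n)
    haveI hXsfin : ∀ n, Finite (Xs n) := fun n => by
      obtain ⟨g, hg, _⟩ := hsec n
      exact Finite.of_injective g hg
    rcases isEmpty_or_nonempty X with hX | hX
    · haveI : ∀ n, IsEmpty (Xs n) := fun n => ⟨fun y => by
        obtain ⟨x, _, _⟩ := he n y
        exact IsEmpty.false x⟩
      have hemp : {n : ℕ | ¬ IsKlIso (f n)} = ∅ := by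
        ext n
        simp only [Set.mem_setOf_eq, Set.mem_empty_iff_false, iff_false, not_not]
        refine ⟨fun y => isEmptyElim y, ?_, ?_⟩
        · funext x; exact isEmptyElim x
        · funext y; exact isEmptyElim y
      rw [hemp]; exact Set.finite_empty
    · have hRN : RightNoetherian M := h.resolve_right (fun he' => he'.false hX.some)
      by_contra hbig
      have hsInf : {n : ℕ | ¬ IsKlIso (f n)}.Infinite := hbig
      have hfsec : ∀ n, ∃ g : Xs n → Xs (n+1), Function.Injective g ∧ ∀ y, ∃ υ, f n (g y) = some (υ, y) :=
        fun n => klSurj_section (hf n)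
      have hmono : ∀ n, Nat.card (Xs n) ≤ Nat.card (Xs (n+1)) := fun n => by
        obtain ⟨g, hg, _⟩ := hfsec n
        exact Nat.card_le_card_of_injective g hg
      have hbd : ∀ n, Nat.card (Xs n) ≤ Nat.card X := fun n => by
        obtain ⟨g, hg, _⟩ := hsec n
        exact Nat.card_le_card_of_injective g hg
      obtain ⟨N, hN⟩ := eventually_const hmono hbd
      have hbij : ∀ n, N ≤ n → ∃ g : Xs n → Xs (n+1),
          Function.Bijective g ∧ ∀ y, ∃ υ, f n (g y) = some (υ, y) := by
        intro n hn
        obtain ⟨g, hg, hgs⟩ := hfsec n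
        refine ⟨g, ?_, hgs⟩
        rw [Nat.bijective_iff_injective_and_card]
        exact ⟨hg, by rw [hN n hn, hN (n+1) (by omega)]⟩
      have hchar : ∀ n, N ≤ n → ∀ x : Xs (n+1), ∃ υ z, f n x = some (υ, z) := by
        intro n hn x
        obtain ⟨g, hgbij, hgs⟩ := hbij n hn
        obtain ⟨y, rfl⟩ := hgbij.2 x
        obtain ⟨υ, hυ⟩ := hgs y
        exact ⟨υ, y, hυ⟩
      have hTotN : ∀ n, N ≤ n → KlTot (f n) := by
        intro n hn x
        obtain ⟨υ, z, hz⟩ := hchar n hn x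
        simp [hz]
      have hInjN : ∀ n, N ≤ n → KlInj (f n) := by
        intro n hn
        obtain ⟨g, hgbij, hgs⟩ := hbij n hn
        have key : ∀ x υ y, f n x = some (υ, y) → x = g y := by
          intro x υ y hx
          obtain ⟨y', rfl⟩ := hgbij.2 x
          obtain ⟨υ', hυ'⟩ := hgs y'
          rw [hx] at hυ'
          simp only [Option.some.injEq, Prod.mk.injEq] at hυ'
          rw [hυ'.2]
        intro x x' υ υ' y hx hx'
        rw [key x υ y hx, key x' υ' y hx']
      have hwit : ∀ n, N ≤ n → ¬ IsKlIso (f n) →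
          ∃ (x : X) (μ : M) (y : Xs (n+1)) (υ : M) (z : Xs n),
            e (n+1) x = some (μ, y) ∧ f n y = some (υ, z) ∧ ¬ IsUnit υ := by
        intro n hn hniso
        have hninv : ¬ KlInv (f n) := fun hinv =>
          hniso (klIso_of (hTotN n hn) (hInjN n hn) (hf n) hinv)
        simp only [KlInv, not_forall] at hninv
        obtain ⟨y, υ, z, hyz, hυ⟩ := hninv
        obtain ⟨x, μ, hx⟩ := he (n+1) y
        exact ⟨x, μ, y, υ, z, hx, hyz, hυ⟩
      set S : Set ℕ := {n | N ≤ n ∧ ¬ IsKlIso (f n)} with hSdef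
      have hSInf : S.Infinite := by
        have hsub : {n : ℕ | ¬ IsKlIso (f n)} \ Set.Iio N ⊆ S := by
          intro n hn
          exact ⟨by simpa using hn.2, hn.1⟩
        exact ((hsInf.diff (Set.finite_Iio N)).mono hsub)
      haveI hNe : Nonempty X := hX
      set xw : ℕ → X := fun n =>
        if h : N ≤ n ∧ ¬ IsKlIso (f n) then (hwit n h.1 h.2).choose else Classical.arbitrary X with hxwdef
      haveI : Infinite ↥S := hSInf.to_subtype
      obtain ⟨xstar, hxstar⟩ := Finite.exists_infinite_fiber (fun n : ↥S => xw n.1)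
      set T : Set ℕ := {n | n ∈ S ∧ xw n = xstar} with hTdef
      have hTInf : T.Infinite := by
        rw [← Set.infinite_coe_iff]
        haveI := hxstar
        refine Infinite.of_injective
          (fun p : ((fun n : ↥S => xw n.1) ⁻¹' {xstar}) => (⟨p.1.1, p.1.2, p.2⟩ : ↥T)) ?_
        intro p q hpq
        simp only [Subtype.mk.injEq] at hpq
        exact Subtype.ext (Subtype.ext hpq)
      have hTprop : ∀ n ∈ T, N ≤ n ∧ ∃ (μ : M) (y : Xs (n+1)) (υ : M) (z : Xs n),
          e (n+1) xstar = some (μ, y) ∧ f n y = some (υ, z) ∧ ¬ IsUnit υ := by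
        intro n hn
        obtain ⟨hnS, hxw⟩ := hn
        have hcond : N ≤ n ∧ ¬ IsKlIso (f n) := hnS
        refine ⟨hcond.1, ?_⟩
        have hspec := (hwit n hcond.1 hcond.2).choose_spec
        have hxw2 : xw n = (hwit n hcond.1 hcond.2).choose := by
          rw [hxwdef]; simp only [dif_pos hcond]
        rw [← hxw2, hxw] at hspec
        exact hspec
      have hstep : ∀ k, N ≤ k → e (k+1) xstar ≠ none → e k xstar ≠ none := by
        intro k hk hsome
        rw [← hc k]
        cases he1 : e (k+1) xstar with
        | none => exact absurd he1 hsome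
        | some p =>
          obtain ⟨b, y⟩ := p
          obtain ⟨w, z, hw⟩ := hchar k hk y
          simp [KlComp, he1, hw]
      have hkey : ∀ d k, N ≤ k → e (k + d) xstar ≠ none → e k xstar ≠ none := by
        intro d
        induction d with
        | zero => intro k _ hsome; exact hsome
        | succ d ih =>
          intro k hk hsome
          apply hstep k hk
          apply ih (k+1) (by omega)
          rwa [show k + 1 + d = k + (d+1) by omega]
      have hdom : ∀ n, N ≤ n → e n xstar ≠ none := by
        intro n hn
        obtain ⟨m, hm, hnm⟩ := hTInf.exists_gt n
        obtain ⟨-, μ, y, υ, z, hm1, -, -⟩ := hTprop m hm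
        refine hkey (m + 1 - n) n hn ?_
        rw [show n + (m + 1 - n) = m + 1 by omega, hm1]
        simp
      set v0 : ℕ → M := fun n => (e n xstar).elim 1 Prod.fst with hv0def
      have hrel : ∀ k, N ≤ k → ∃ w : M, v0 k = v0 (k+1) * w ∧ (k ∈ T → ¬ IsUnit w) := by
        intro k hk
        cases he1 : e (k+1) xstar with
        | none => exact absurd he1 (hdom (k+1) (by omega))
        | some p =>
          obtain ⟨b, y⟩ := p
          obtain ⟨w, z, hw⟩ := hchar k hk y
          have hek : e k xstar = some (b * w, z) := by
            rw [← hc k]; simp [KlComp, he1, hw]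
          refine ⟨w, ?_, ?_⟩
          · rw [hv0def]
            simp only [hek, he1, Option.elim]
          · intro hkT hwu
            obtain ⟨-, μ, y', υ, z', h1, h2, h3⟩ := hTprop k hkT
            rw [he1] at h1
            simp only [Option.some.injEq, Prod.mk.injEq] at h1
            rw [← h1.2] at h2
            rw [hw] at h2
            simp only [Option.some.injEq, Prod.mk.injEq] at h2
            rw [← h2.1] at h3
            exact h3 hwu
      set W : ℕ → M := fun k => if hk : N ≤ k then (hrel k hk).choose else 1 with hWdef
      have hW1 : ∀ k, N ≤ k → v0 k = v0 (k+1) * W k := by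
        intro k hk
        have hspec := (hrel k hk).choose_spec
        rw [hWdef]
        simp only [dif_pos hk]
        exact hspec.1
      have hW2 : ∀ k ∈ T, ¬ IsUnit (W k) := by
        intro k hk
        have hkN : N ≤ k := (hTprop k hk).1
        have hspec := (hrel k hkN).choose_spec
        rw [hWdef]
        simp only [dif_pos hkN]
        exact hspec.2 hk
      set P : ℕ → ℕ → M := fun a => Nat.rec 1 (fun d p => W (a + d) * p) with hPdef
      have hP0 : ∀ a, P a 0 = 1 := fun a => rfl
      have hPs : ∀ a d, P a (d+1) = W (a + d) * P a d := fun a d => rfl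
      have htel : ∀ a, N ≤ a → ∀ d, v0 a = v0 (a + d) * P a d := by
        intro a ha d
        induction d with
        | zero => rw [hP0, mul_one, Nat.add_zero]
        | succ d ih =>
          rw [hPs, ← mul_assoc, show a + (d+1) = (a+d) + 1 from rfl, ← hW1 (a+d) (by omega)]
          exact ih
      have hsplit : ∀ a d, P a (d+1) = P (a+1) d * W a := by
        intro a d
        induction d with
        | zero =>
          rw [hPs, hP0, hP0, mul_one, one_mul, Nat.add_zero]
        | succ d ih =>
          rw [hPs a (d+1), ih, ← mul_assoc, show a + (d+1) = (a+1) + d by omega, ← hPs (a+1) d]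
      have hTInf' : (setOf (· ∈ T)).Infinite := by exact hTInf
      set t : ℕ → ℕ := Nat.nth (· ∈ T) with htdef
      have htmem : ∀ k, t k ∈ T := fun k => Nat.nth_mem_of_infinite hTInf' k
      have htmono : StrictMono t := Nat.nth_strictMono hTInf'
      have htN : ∀ k, N ≤ t k := fun k => (hTprop (t k) (htmem k)).1
      have hrelseq : ∀ n, v0 (t n) = v0 (t (n+1)) * P (t n) (t (n+1) - t n) := by
        intro n
        have hlt : t n < t (n+1) := htmono (by omega)
        have htl := htel (t n) (htN n) (t (n+1) - t n)
        rwa [show t n + (t (n+1) - t n) = t (n+1) by omega] at htl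
      obtain ⟨k, hk⟩ := hRN (fun k => P (t k) (t (k+1) - t k)) (fun k => v0 (t k)) hrelseq
      have hlt : t k < t (k+1) := htmono (by omega)
      have hd : t (k+1) - t k = (t (k+1) - t k - 1) + 1 := by omega
      rw [hd, hsplit] at hk
      exact hW2 (t k) (htmem k) (hRN.isUnit_right_of_isUnit_mul hk)
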